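/- Let K be a nonempty compact subset of (0, λ_c] × (0, 1]. Then there exists α ≥ 1 such that the function (λ, γ) ↦ λγ^α attains its maximum on K at a unique point. -/
import Mathlib


open Real Set

/-- Monotonicity of the second coordinate of maximizers in the exponent. -/
lemma maximizer_snd_mono (K : Set (ℝ × ℝ))
    (hKsub : K ⊆ Ioc (0:ℝ) (1 / (12 * Real.sqrt 3)) ×ˢ Ioc (0:ℝ) 1)
    {α α' : ℝ} (hαα' : α < α') {z w : ℝ × ℝ} (hz : z ∈ K) (hw : w ∈ K)
    (hmz : ∀ u ∈ K, u.1 * u.2 ^ α ≤ z.1 * z.2 ^ α)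
    (hmw : ∀ u ∈ K, u.1 * u.2 ^ α' ≤ w.1 * w.2 ^ α') :
    z.2 ≤ w.2 := by
  obtain ⟨hz1, hz2⟩ := hKsub hz
  obtain ⟨hw1, hw2⟩ := hKsub hw
  have ha0 : (0:ℝ) < z.2 := hz2.1
  have hb0 : (0:ℝ) < w.2 := hw2.1
  have hA : (0:ℝ) < z.1 := hz1.1
  have hB : (0:ℝ) < w.1 := hw1.1
  by_contra hcon
  push_neg at hcon
  have key1 : w.1 * w.2 ^ α ≤ z.1 * z.2 ^ α := hmz w hw
  have key2 : z.1 * z.2 ^ α' ≤ w.1 * w.2 ^ α' := hmw z hz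
  have h3 : (w.1 * w.2 ^ α) * (z.1 * z.2 ^ α') ≤ (z.1 * z.2 ^ α) * (w.1 * w.2 ^ α') :=
    mul_le_mul key1 key2 (by positivity) (by positivity)
  have h4 : w.2 ^ α * z.2 ^ α' ≤ z.2 ^ α * w.2 ^ α' := by
    have hZW : (0:ℝ) < z.1 * w.1 := by positivity
    have : (z.1 * w.1) * (w.2 ^ α * z.2 ^ α') ≤ (z.1 * w.1) * (z.2 ^ α * w.2 ^ α') := by
      nlinarith [h3]
    exact le_of_mul_le_mul_left this hZW
  have h5 : z.2 ^ (α' - α) ≤ w.2 ^ (α' - α) := by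
    rw [Real.rpow_sub ha0, Real.rpow_sub hb0,
      div_le_div_iff₀ (by positivity) (by positivity)]
    nlinarith [h4]
  have h6 : w.2 ^ (α' - α) < z.2 ^ (α' - α) :=
    Real.rpow_lt_rpow hb0.le hcon (by linarith)
  linarith

/-- Let `K` be a nonempty compact subset of `(0, λ_c] × (0, 1]`, where
`λ_c = 1/(12√3)`.  Then there exists `α ≥ 1` such that the function
`(λ, γ) ↦ λ·γ^α` attains its maximum on `K` at a unique point. -/
theorem exists_unique_maximizer_of_compact
    (K : Set (ℝ × ℝ)) (hK : IsCompact K) (hKne : K.Nonempty)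
    (hKsub : K ⊆ Ioc (0:ℝ) (1 / (12 * Real.sqrt 3)) ×ˢ Ioc (0:ℝ) 1) :
    ∃ α : ℝ, 1 ≤ α ∧
      ∃! z : ℝ × ℝ, z ∈ K ∧ ∀ w ∈ K, w.1 * w.2 ^ α ≤ z.1 * z.2 ^ α := by
  by_contra hcon
  push_neg at hcon
  -- For every α ≥ 1 there exist two maximizers with distinct second coordinates.
  have H : ∀ α : ℝ, 1 ≤ α → ∃ z w : ℝ × ℝ, z ∈ K ∧ w ∈ K ∧
      (∀ u ∈ K, u.1 * u.2 ^ α ≤ z.1 * z.2 ^ α) ∧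
      (∀ u ∈ K, u.1 * u.2 ^ α ≤ w.1 * w.2 ^ α) ∧ z.2 < w.2 := by
    intro α hα
    have hcont : ContinuousOn (fun p : ℝ × ℝ => p.1 * p.2 ^ α) K := by
      apply ContinuousOn.mul continuousOn_fst
      exact ContinuousOn.rpow_const continuousOn_snd
        (fun x hx => Or.inr (by linarith))
    obtain ⟨z0, hz0K, hz0max⟩ := hK.exists_isMaxOn hKne hcont
    have hz0max' : ∀ u ∈ K, u.1 * u.2 ^ α ≤ z0.1 * z0.2 ^ α := fun u hu => hz0max hu
    have hnu := hcon α hα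
    have h2 : ∃ z1 : ℝ × ℝ, (z1 ∈ K ∧ ∀ u ∈ K, u.1 * u.2 ^ α ≤ z1.1 * z1.2 ^ α) ∧
        z1 ≠ z0 := by
      by_contra h'
      push_neg at h'
      exact hnu ⟨z0, ⟨hz0K, hz0max'⟩, fun y hy => h' y hy⟩
    obtain ⟨z1, ⟨hz1K, hz1max⟩, hne⟩ := h2
    have hsnd : z1.2 ≠ z0.2 := by
      intro heq
      apply hne
      have hv : z1.1 * z1.2 ^ α = z0.1 * z0.2 ^ α :=
        le_antisymm (hz0max' z1 hz1K) (hz1max z0 hz0K)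
      have hp : (0:ℝ) < z0.2 := (hKsub hz0K).2.1
      have hpow : (0:ℝ) < z0.2 ^ α := Real.rpow_pos_of_pos hp α
      have h1 : z1.1 = z0.1 := by
        rw [heq] at hv
        exact mul_right_cancel₀ (ne_of_gt hpow) hv
      exact Prod.ext h1 heq
    rcases lt_or_gt_of_ne hsnd with h | h
    · exact ⟨z1, z0, hz1K, hz0K, hz1max, hz0max', h⟩
    · exact ⟨z0, z1, hz0K, hz1K, hz0max', hz1max, h⟩
  choose z w hzK hwK hmz hmw hlt using H
  -- pick a rational strictly between the two second coordinates
  have Hq : ∀ α : ℝ, ∀ hα : 1 ≤ α, ∃ q : ℚ,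
      (z α hα).2 < (q:ℝ) ∧ (q:ℝ) < (w α hα).2 :=
    fun α hα => exists_rat_btwn (hlt α hα)
  choose q hq1 hq2 using Hq
  -- this gives an injection from [1, ∞) into ℚ
  set F : (Ici (1:ℝ)) → ℚ := fun x => q x.1 x.2 with hF
  have hmono : ∀ x y : Ici (1:ℝ), (x:ℝ) < (y:ℝ) → F x < F y := by
    rintro ⟨a, ha⟩ ⟨b, hb⟩ hab
    have hmid : (w a ha).2 ≤ (z b hb).2 :=
      maximizer_snd_mono K hKsub hab (hwK a ha) (hzK b hb) (hmw a ha) (hmz b hb)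
    have : (q a ha : ℝ) < (q b hb : ℝ) :=
      lt_of_lt_of_le (hq2 a ha) (lt_of_le_of_lt hmid (hq1 b hb)).le
    exact_mod_cast this
  have hinj : Function.Injective F := by
    intro x y hxy
    rcases lt_trichotomy (x:ℝ) (y:ℝ) with h | h | h
    · exact absurd hxy (ne_of_lt (hmono x y h))
    · exact Subtype.ext h
    · exact absurd hxy.symm (ne_of_lt (hmono y x h))
  have hcount : (Ici (1:ℝ)).Countable := by
    rw [← Set.countable_coe_iff]
    exact hinj.countable
  have h2 : Cardinal.mk (Ici (1:ℝ)) ≤ Cardinal.aleph0 := by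
    rw [Cardinal.mk_le_aleph0_iff, Set.countable_coe_iff]
    exact hcount
  rw [Cardinal.mk_Ici_real] at h2
  exact absurd h2 (not_le.mpr Cardinal.aleph0_lt_continuum)
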